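/- The Kalai stretching operator gives a bijection between the minimal generators of I_{c,(n,d,t)} and the minimal generators of I_{c,(n+d-1,d,t+1)}: a monomial v is a generator of I_{c,(n+d-1,d,t+1)} if and only if v = u^σ for some generator u of I_{c,(n,d,t)}. -/

import Mathlib

/-- A list (representing a weakly increasing multiset) is `t`-spread if
successive entries differ by at least `t`. -/
def TSpread (t : ℕ) (A : List ℕ) : Prop :=
  A.Chain' (fun a b => a + t ≤ b)

/-- A block (for the parameter `t`) is a nonempty run whose successive
differences are exactly `t`. -/
def IsBlock (t : ℕ) (B : List ℕ) : Prop :=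
  B ≠ [] ∧ B.Chain' (fun a b => b = a + t)

/-- `Bs` is the decomposition of `A` into maximal blocks. -/
def IsBlockDecomp (t : ℕ) (A : List ℕ) (Bs : List (List ℕ)) : Prop :=
  A = Bs.flatten ∧ (∀ B ∈ Bs, IsBlock t B) ∧
    Bs.Chain' (fun B C => ∀ x ∈ B.getLast?, ∀ y ∈ C.head?, x + t < y)

/-- `A` is `c`-bounded: every block of its (unique) maximal block
decomposition has size at most `c`. -/
def CBounded (c t : ℕ) (A : List ℕ) : Prop :=
  ∀ Bs, IsBlockDecomp t A Bs → ∀ B ∈ Bs, B.length ≤ c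

/-- The set of (sorted index lists of) minimal monomial generators of the
`c`-bounded `t`-spread Veronese ideal `I_{c,(n,d,t)}`. -/
def Gen (c n d t : ℕ) : Set (List ℕ) :=
  {A | A.length = d ∧ TSpread t A ∧ CBounded c t A ∧ ∀ i ∈ A, 1 ≤ i ∧ i ≤ n}


/-- Kalai stretching operator on sorted lists of indices:
`{i₁ ≤ i₂ ≤ … ≤ i_d} ↦ {i₁, i₂+1, …, i_d+(d-1)}`. -/
def kalai (A : List ℕ) : List ℕ :=
  A.mapIdx (fun i a => a + i)

namespace Stmt3Aux

/-- add `k, k+1, k+2, …` to the entries of a list. -/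
def str (k : ℕ) : List ℕ → List ℕ
  | [] => []
  | a :: A => (a + k) :: str (k + 1) A

/-- subtract `k, k+1, k+2, …` from the entries of a list. -/
def unstr (k : ℕ) : List ℕ → List ℕ
  | [] => []
  | a :: A => (a - k) :: unstr (k + 1) A

/-- blockwise stretching. -/
def strB (k : ℕ) : List (List ℕ) → List (List ℕ)
  | [] => []
  | B :: Bs => str k B :: strB (k + B.length) Bs

theorem length_str (A : List ℕ) : ∀ k, (str k A).length = A.length := by
  induction A with
  | nil => intro k; rfl
  | cons a A ih => intro k; simp [str, ih]

theorem length_unstr (A : List ℕ) : ∀ k, (unstr k A).length = A.length := by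
  induction A with
  | nil => intro k; rfl
  | cons a A ih => intro k; simp [unstr, ih]

theorem kalai_eq_str (A : List ℕ) : kalai A = str 0 A := by
  suffices h : ∀ (f : ℕ → ℕ → ℕ) k, (∀ i a, f i a = a + (i + k)) →
      A.mapIdx f = str k A by
    exact h _ 0 (fun i a => by simp)
  induction A with
  | nil => intro f k h; rfl
  | cons a A ih =>
    intro f k h
    rw [List.mapIdx_cons, str, h 0 a]
    congr 1
    · omega
    · exact ih _ (k + 1) (fun i a => by rw [h]; omega)

theorem str_append (A : List ℕ) : ∀ k B, str k (A ++ B) = str k A ++ str (k + A.length) B := by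
  induction A with
  | nil => intro k B; simp [str]
  | cons a A ih =>
    intro k B
    show (a + k) :: str (k + 1) (A ++ B) = (a + k) :: (str (k + 1) A ++ str (k + (A.length + 1)) B)
    rw [ih, show k + 1 + A.length = k + (A.length + 1) from by omega]

theorem flatten_strB (Cs : List (List ℕ)) : ∀ k, (strB k Cs).flatten = str k Cs.flatten := by
  induction Cs with
  | nil => intro k; rfl
  | cons C Cs ih =>
    intro k
    show str k C ++ (strB (k + C.length) Cs).flatten = str k (C ++ Cs.flatten)
    rw [ih, str_append]

theorem unstr_str (A : List ℕ) : ∀ k, unstr k (str k A) = A := by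
  induction A with
  | nil => intro k; rfl
  | cons a A ih =>
    intro k
    show (a + k - k) :: unstr (k + 1) (str (k + 1) A) = a :: A
    rw [ih]
    congr 1
    omega

theorem str_unstr (A : List ℕ) : ∀ k, (∀ x ∈ A.head?, k ≤ x) →
    A.Chain' (fun a b => a + 1 ≤ b) → str k (unstr k A) = A := by
  induction A with
  | nil => intro k _ _; rfl
  | cons a A ih =>
    intro k hk hc
    simp only [List.Chain', List.isChain_cons] at hc
    show (a - k + k) :: str (k + 1) (unstr (k + 1) A) = a :: A
    have hka : k ≤ a := hk a rfl
    rw [ih (k + 1) (fun x hx => by have := hc.1 x hx; omega) hc.2]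
    congr 1
    omega

theorem decomp_exists (Bs : List (List ℕ)) : ∀ k A, Bs.flatten = str k A →
    ∃ Cs : List (List ℕ), Cs.flatten = A ∧ Bs = strB k Cs := by
  induction Bs with
  | nil =>
    intro k A h
    have : A.length = 0 := by
      have := congrArg List.length h
      simp [length_str] at this
      omega
    refine ⟨[], ?_, rfl⟩
    cases A with
    | nil => rfl
    | cons a A => simp at this
  | cons B Bs ih =>
    intro k A h
    have hlen : B.length + Bs.flatten.length = A.length := by
      have := congrArg List.length h
      simpa [length_str] using this
    have hm : B.length ≤ A.length := by omega
    have hA : A = A.take B.length ++ A.drop B.length := (List.take_append_drop _ _).symm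
    have hsplit : str k A = str k (A.take B.length) ++ str (k + B.length) (A.drop B.length) := by
      conv_lhs => rw [hA]
      rw [str_append]
      congr 2
      simp [hm]
    rw [hsplit] at h
    have hBl : B.length = (str k (A.take B.length)).length := by
      rw [length_str]; simp [hm]
    have hinj := List.append_inj (by simpa using h) hBl
    obtain ⟨Cs, hCs1, hCs2⟩ := ih (k + B.length) (A.drop B.length) hinj.2
    refine ⟨A.take B.length :: Cs, ?_, ?_⟩
    · show A.take B.length ++ Cs.flatten = A
      rw [hCs1]; exact (List.take_append_drop _ _)
    · show B :: Bs = str k (A.take B.length) :: strB (k + (A.take B.length).length) Cs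
      rw [List.length_take, min_eq_left hm, ← hinj.1, ← hCs2]

theorem chain'_str {R S : ℕ → ℕ → Prop}
    (hRS : ∀ a b k, R (a + k) (b + (k + 1)) ↔ S a b) (A : List ℕ) :
    ∀ k, (str k A).Chain' R ↔ A.Chain' S := by
  induction A with
  | nil => intro k; simp [str, List.Chain']
  | cons a A ih =>
    intro k
    cases A with
    | nil => simp [str, List.Chain', List.isChain_singleton]
    | cons b l =>
      show List.Chain' R ((a + k) :: (b + (k + 1)) :: str (k + 1 + 1) l) ↔ _
      simp only [List.Chain', List.isChain_cons_cons]
      have h2 : ((b + (k + 1)) :: str (k + 1 + 1) l) = str (k + 1) (b :: l) := rfl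
      constructor
      · rintro ⟨h1, hrest⟩
        exact ⟨(hRS a b k).1 h1, (ih (k + 1)).1 (by rw [h2] at hrest; exact hrest)⟩
      · rintro ⟨h1, hrest⟩
        refine ⟨(hRS a b k).2 h1, ?_⟩
        rw [h2]
        exact (ih (k + 1)).2 hrest

theorem head?_str (A : List ℕ) (k : ℕ) : (str k A).head? = A.head?.map (· + k) := by
  cases A <;> rfl

theorem getLast?_str (A : List ℕ) : ∀ k,
    (str k A).getLast? = A.getLast?.map (· + (k + A.length - 1)) := by
  induction A with
  | nil => intro k; rfl
  | cons a A ih =>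
    intro k
    cases A with
    | nil => simp [str]
    | cons b l =>
      show ((a + k) :: str (k + 1) (b :: l)).getLast? = _
      have hstr : str (k + 1) (b :: l) = (b + (k + 1)) :: str (k + 1 + 1) l := rfl
      rw [hstr, List.getLast?_cons_cons, ← hstr, ih (k + 1), List.getLast?_cons_cons]
      have hlen : k + 1 + (b :: l).length - 1 = k + (a :: b :: l).length - 1 := by
        simp
        omega
      rw [hlen]

theorem isBlock_str {t : ℕ} {C : List ℕ} (k : ℕ) : IsBlock (t + 1) (str k C) ↔ IsBlock t C := by
  unfold IsBlock
  constructor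
  · rintro ⟨h1, h2⟩
    refine ⟨?_, (chain'_str (R := fun a b => b = a + (t + 1))
      (S := fun a b => b = a + t) (fun a b k => by omega) C k).1 h2⟩
    intro h; rw [h] at h1; exact h1 rfl
  · rintro ⟨h1, h2⟩
    refine ⟨?_, (chain'_str (R := fun a b => b = a + (t + 1))
      (S := fun a b => b = a + t) (fun a b k => by omega) C k).2 h2⟩
    intro h
    have := congrArg List.length h
    rw [length_str] at this
    simp at this
    exact h1 this

theorem isBlock_strB {t : ℕ} (Cs : List (List ℕ)) : ∀ k,
    ((∀ B ∈ strB k Cs, IsBlock (t + 1) B) ↔ (∀ C ∈ Cs, IsBlock t C)) := by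
  induction Cs with
  | nil => intro k; simp [strB]
  | cons C Cs ih =>
    intro k
    show (∀ B ∈ str k C :: strB (k + C.length) Cs, _) ↔ _
    rw [List.forall_mem_cons, List.forall_mem_cons, isBlock_str, ih]

theorem lengths_strB (Cs : List (List ℕ)) : ∀ k,
    (strB k Cs).map List.length = Cs.map List.length := by
  induction Cs with
  | nil => intro k; rfl
  | cons C Cs ih =>
    intro k
    show (str k C).length :: (strB (k + C.length) Cs).map List.length = _
    rw [length_str, ih]
    rfl

theorem chain'_strB {t : ℕ} (Cs : List (List ℕ)) : ∀ k, (∀ C ∈ Cs, C ≠ []) →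
    ((strB k Cs).Chain' (fun B C => ∀ x ∈ B.getLast?, ∀ y ∈ C.head?, x + (t + 1) < y) ↔
      Cs.Chain' (fun B C => ∀ x ∈ B.getLast?, ∀ y ∈ C.head?, x + t < y)) := by
  induction Cs with
  | nil => intro k _; simp [strB, List.Chain']
  | cons C Cs ih =>
    intro k hne
    cases Cs with
    | nil => simp [strB, List.Chain', List.isChain_singleton]
    | cons D Ds =>
      show List.Chain' _ (str k C :: str (k + C.length) D :: strB _ Ds) ↔ _
      simp only [List.Chain', List.isChain_cons_cons]
      have hC : C ≠ [] := hne C (by simp)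
      have hClen : 1 ≤ C.length := List.length_pos_iff.2 hC
      have hrest : (str (k + C.length) D :: strB (k + C.length + D.length) Ds) =
          strB (k + C.length) (D :: Ds) := rfl
      have hpair : (∀ x ∈ (str k C).getLast?, ∀ y ∈ (str (k + C.length) D).head?,
          x + (t + 1) < y) ↔ (∀ x ∈ C.getLast?, ∀ y ∈ D.head?, x + t < y) := by
        rw [getLast?_str, head?_str]
        constructor
        · intro h x hx y hy
          have := h (x + (k + C.length - 1)) (Option.mem_map.2 ⟨x, hx, rfl⟩)
            (y + (k + C.length)) (Option.mem_map.2 ⟨y, hy, rfl⟩)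
          omega
        · intro h x' hx' y' hy'
          obtain ⟨x, hx, rfl⟩ := Option.mem_map.1 hx'
          obtain ⟨y, hy, rfl⟩ := Option.mem_map.1 hy'
          have := h x hx y hy
          omega
      constructor
      · rintro ⟨h1, h2⟩
        rw [hrest] at h2
        exact ⟨hpair.1 h1, (ih (k + C.length) (fun C hC => hne C (by simp [hC]))).1 h2⟩
      · rintro ⟨h1, h2⟩
        refine ⟨hpair.2 h1, ?_⟩
        rw [hrest]
        exact (ih (k + C.length) (fun C hC => hne C (by simp [hC]))).2 h2

theorem isBlockDecomp_strB {t : ℕ} {Cs : List (List ℕ)} {k : ℕ} {A : List ℕ}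
    (hA : Cs.flatten = A) :
    IsBlockDecomp (t + 1) (str k A) (strB k Cs) ↔ IsBlockDecomp t A Cs := by
  unfold IsBlockDecomp
  have hflat : str k A = (strB k Cs).flatten := by rw [flatten_strB, hA]
  constructor
  · rintro ⟨_, hbl, hch⟩
    have hbl' := (isBlock_strB Cs k).1 hbl
    have hne : ∀ C ∈ Cs, C ≠ [] := fun C hC => (hbl' C hC).1
    exact ⟨hA.symm, hbl', (chain'_strB Cs k hne).1 hch⟩
  · rintro ⟨_, hbl, hch⟩
    have hne : ∀ C ∈ Cs, C ≠ [] := fun C hC => (hbl C hC).1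
    exact ⟨hflat, (isBlock_strB Cs k).2 hbl, (chain'_strB Cs k hne).2 hch⟩

theorem cBounded_str (c t : ℕ) (A : List ℕ) (k : ℕ) :
    CBounded c (t + 1) (str k A) ↔ CBounded c t A := by
  constructor
  · intro h Cs hCs B hB
    have hdec := (isBlockDecomp_strB (k := k) hCs.1.symm).2 hCs
    have hmem : B.length ∈ (strB k Cs).map List.length := by
      rw [lengths_strB]
      exact List.mem_map.2 ⟨B, hB, rfl⟩
    obtain ⟨B', hB', hBl⟩ := List.mem_map.1 hmem
    rw [← hBl]
    exact h _ hdec B' hB'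
  · intro h Bs hBs B hB
    obtain ⟨Cs, hCs1, rfl⟩ := decomp_exists Bs k A hBs.1.symm
    have hdec := (isBlockDecomp_strB (k := k) hCs1).1 hBs
    have hmem : B.length ∈ Cs.map List.length := by
      rw [← lengths_strB Cs k]
      exact List.mem_map.2 ⟨B, hB, rfl⟩
    obtain ⟨C, hC, hCl⟩ := List.mem_map.1 hmem
    rw [← hCl]
    exact h _ hdec C hC

theorem tSpread_str {t : ℕ} (A : List ℕ) (k : ℕ) :
    TSpread (t + 1) (str k A) ↔ TSpread t A :=
  chain'_str (fun a b k => by omega) A k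

theorem mem_str (A : List ℕ) : ∀ k b, b ∈ str k A →
    ∃ a ∈ A, ∃ j, j < A.length ∧ b = a + (k + j) := by
  induction A with
  | nil => intro k b h; exact absurd h (by simp [str])
  | cons a A ih =>
    intro k b h
    rcases h with _ | ⟨_, h⟩
    · exact ⟨a, by simp, 0, by simp, by omega⟩
    · obtain ⟨a', ha', j, hj, hb⟩ := ih (k + 1) b h
      exact ⟨a', by simp [ha'], j + 1, by simp; omega, by omega⟩

theorem head_le_getLast (A : List ℕ) (h : A.Chain' (fun a b => a + 1 ≤ b)) :
    ∀ x ∈ A.head?, ∀ y ∈ A.getLast?, x + A.length ≤ y + 1 := by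
  induction A with
  | nil => intro x hx; exact absurd hx (by simp)
  | cons a A ih =>
    intro x hx y hy
    cases A with
    | nil =>
      simp at hx hy ⊢
      omega
    | cons b l =>
      simp only [List.Chain', List.isChain_cons_cons] at h
      rw [List.getLast?_cons_cons] at hy
      have hx' : a = x := by simpa using hx
      have := ih h.2 b rfl y hy
      simp at *
      omega

theorem unstr_le (N : ℕ) (A : List ℕ) : ∀ k, A.Chain' (fun a b => a + 1 ≤ b) →
    (∀ x ∈ A.getLast?, x < k + A.length + N) → ∀ b ∈ unstr k A, b ≤ N := by
  induction A with
  | nil => intro k _ _ b hb; exact absurd hb (by simp [unstr])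
  | cons a A ih =>
    intro k hc hlast b hb
    have hne : (a :: A) ≠ [] := by simp
    obtain ⟨y, hy⟩ := Option.isSome_iff_exists.1 (List.getLast?_isSome.2 hne)
    have hy' : y ∈ (a :: A).getLast? := hy
    have h1 := head_le_getLast _ hc a rfl y hy'
    have h2 := hlast y hy'
    rcases hb with _ | ⟨_, hb⟩
    · simp at h1 h2 ⊢
      omega
    · simp only [List.Chain', List.isChain_cons] at hc
      refine ih (k + 1) hc.2 ?_ b hb
      intro x hx
      cases A with
      | nil => exact absurd hx (by simp)
      | cons c l =>
        have : x ∈ (a :: c :: l).getLast? := by rwa [List.getLast?_cons_cons]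
        have := hlast x this
        simp at *
        omega

theorem unstr_ge (m : ℕ) (A : List ℕ) : ∀ k, A.Chain' (fun a b => a + 1 ≤ b) →
    (∀ x ∈ A.head?, k + m ≤ x) → ∀ b ∈ unstr k A, m ≤ b := by
  induction A with
  | nil => intro k _ _ b hb; exact absurd hb (by simp [unstr])
  | cons a A ih =>
    intro k hc hhead b hb
    simp only [List.Chain', List.isChain_cons] at hc
    have ha : k + m ≤ a := hhead a rfl
    rcases hb with _ | ⟨_, hb⟩
    · omega
    · exact ih (k + 1) hc.2 (fun x hx => by have := hc.1 x hx; omega) b hb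

end Stmt3Aux

open Stmt3Aux in
/-- The Kalai stretching operator is a bijection between the
minimal generators of `I_{c,(n,d,t)}` and those of `I_{c,(n+d-1,d,t+1)}`:
`v` is a generator of the latter iff `v = u^σ` for a generator `u` of the
former. -/
theorem stmt_3 (c n d t : ℕ) (v : List ℕ) :
    v ∈ Gen c (n + d - 1) d (t + 1) ↔ ∃ u ∈ Gen c n d t, v = kalai u := by
  constructor
  · rintro ⟨hlen, hsp, hcb, hbd⟩
    have hch : v.Chain' (fun a b => a + 1 ≤ b) := hsp.imp (fun a b h => by omega)
    have hv0 : str 0 (unstr 0 v) = v := str_unstr v 0 (fun x _ => Nat.zero_le x) hch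
    refine ⟨unstr 0 v, ⟨?_, ?_, ?_, ?_⟩, ?_⟩
    · rw [length_unstr]; exact hlen
    · exact (tSpread_str (unstr 0 v) 0).1 (by rw [hv0]; exact hsp)
    · exact (cBounded_str c t (unstr 0 v) 0).1 (by rw [hv0]; exact hcb)
    · intro i hi
      constructor
      · refine unstr_ge 1 v 0 hch ?_ i hi
        intro x hx
        have := (hbd x (List.mem_of_mem_head? hx)).1
        omega
      · refine unstr_le n v 0 hch ?_ i hi
        intro x hx
        have h1 := (hbd x (List.mem_of_mem_getLast? hx)).2
        have h2 := (hbd x (List.mem_of_mem_getLast? hx)).1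
        have hd : 1 ≤ d := by
          rw [← hlen]
          exact List.length_pos_iff.2 (fun h => by rw [h] at hx; exact absurd hx (by simp))
        rw [hlen]
        omega
    · rw [kalai_eq_str, hv0]
  · rintro ⟨u, ⟨hlen, hsp, hcb, hbd⟩, rfl⟩
    rw [kalai_eq_str]
    refine ⟨?_, ?_, ?_, ?_⟩
    · rw [length_str]; exact hlen
    · exact (tSpread_str u 0).2 hsp
    · exact (cBounded_str c t u 0).2 hcb
    · intro i hi
      obtain ⟨a, ha, j, hj, rfl⟩ := mem_str u 0 i hi
      have := hbd a ha
      rw [hlen] at hj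
      omega
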